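/- For a fixed seed s, a vertex u ≠ s, and a random sampled graph g derived from G, the expected value E[σ^{→u}(s,g)] equals the decrease in expected spread caused by blocking u: E[σ^{→u}(s,g)] = E({s}, G) − E({s}, G[V\{u}]). -/

import Mathlib

/-!
Independent cascade model via random sampled (live-edge) graphs.
-/

open Finset

noncomputable section
open scoped Classical

variable {V : Type*}

/-- Probability weight of a sampled graph `ω`. -/
def sampleWeight [Fintype V] (p : V → V → ℝ) (ω : V → V → Bool) : ℝ :=
  ∏ u : V, ∏ v : V, if ω u v then p u v else 1 - p u v

/-- Reachability from `s` to `w` in the sampled graph `ω`, through vertices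
outside the blocker set `B`. -/
def ReachB (ω : V → V → Bool) (B : Finset V) (s w : V) : Prop :=
  Relation.ReflTransGen (fun a b => ω a b = true ∧ a ∉ B ∧ b ∉ B) s w

/-- Number of vertices reachable from the seed set `S` in the sampled graph `ω`
restricted to `V \ B`. -/
def sigmaB [Fintype V] (ω : V → V → Bool) (B S : Finset V) : ℕ :=
  (Finset.univ.filter fun w => ∃ s ∈ S, ReachB ω B s w).card

/-- Expected spread of seed set `S` when the blocker set `B` is removed. -/
def spread [Fintype V] (p : V → V → ℝ) (S B : Finset V) : ℝ :=
  ∑ ω : V → V → Bool, sampleWeight p ω * (sigmaB ω B S : ℝ)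

/-- `sigmaThrough ω u s` = `σ^{→u}(s, ω)`: the number of vertices `w` reachable
from `s` in the sampled graph `ω` such that every path from `s` to `w`
passes through `u`. -/
def sigmaThrough [Fintype V] (ω : V → V → Bool) (u s : V) : ℕ :=
  (Finset.univ.filter fun w => ReachB ω ∅ s w ∧ ¬ ReachB ω {u} s w).card

/-- `E[σ^{→u}(s,g)]` equals the decrease in expected spread caused
by blocking `u`: `E[σ^{→u}(s,g)] = E({s}, G) - E({s}, G[V \ {u}])`. -/
theorem expected_sigma_through_eq_spread_decrease [Fintype V]
    (p : V → V → ℝ) (hp : ∀ u v, 0 ≤ p u v ∧ p u v ≤ 1)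
    (s u : V) (hsu : u ≠ s) :
    (∑ ω : V → V → Bool, sampleWeight p ω * (sigmaThrough ω u s : ℝ)) =
      spread p {s} ∅ - spread p {s} {u} := by
  have key : ∀ ω : V → V → Bool,
      (sigmaThrough ω u s : ℝ) = (sigmaB ω ∅ {s} : ℝ) - (sigmaB ω {u} {s} : ℝ) := by
    intro ω
    have hmono : ∀ w, ReachB ω {u} s w → ReachB ω ∅ s w := by
      intro w h
      exact Relation.ReflTransGen.mono (r := fun a b => ω a b = true ∧ a ∉ ({u} : Finset V) ∧ b ∉ ({u} : Finset V))
        (p := fun a b => ω a b = true ∧ a ∉ (∅ : Finset V) ∧ b ∉ (∅ : Finset V)) (fun a b hab =>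
        ⟨hab.1, Finset.notMem_empty a, Finset.notMem_empty b⟩) _ _ h
    have hsub : (Finset.univ.filter fun w => ∃ s' ∈ ({s} : Finset V), ReachB ω {u} s' w) ⊆
        (Finset.univ.filter fun w => ∃ s' ∈ ({s} : Finset V), ReachB ω ∅ s' w) := by
      intro w hw
      simp only [Finset.mem_filter, Finset.mem_singleton] at hw ⊢
      obtain ⟨_, s', hs', h⟩ := hw
      exact ⟨Finset.mem_univ w, s', hs', by subst hs'; exact hmono w h⟩
    have hset : (Finset.univ.filter fun w => ReachB ω ∅ s w ∧ ¬ ReachB ω {u} s w) =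
        (Finset.univ.filter fun w => ∃ s' ∈ ({s} : Finset V), ReachB ω ∅ s' w) \
        (Finset.univ.filter fun w => ∃ s' ∈ ({s} : Finset V), ReachB ω {u} s' w) := by
      ext w
      simp [Finset.mem_filter, Finset.mem_sdiff]
    have hcard := Finset.card_sdiff_of_subset hsub
    unfold sigmaThrough sigmaB
    rw [hset, hcard]
    have hle := Finset.card_le_card hsub
    push_cast [Nat.cast_sub hle]
    ring
  unfold spread
  rw [← Finset.sum_sub_distrib]
  refine Finset.sum_congr rfl fun ω _ => ?_
  rw [key ω]
  ring
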